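/- Let (a_n)_{n≥0} be a complex sequence whose terms are nonzero for all sufficiently large n and which satisfies, for all n ≥ 2, a_n = [(n+iε)(n+2iκε+iε−2s−1) − λ + ε² + κ(2τ−i)ε] / (2iεκ n) · a_{n−1} + [(n+2iε−1)(iτ − (n−s+iε−1))] / (2iεκ n) · a_{n−2}. If the limit c = lim_{n→∞} a_n/(n·a_{n−1}) exists and c ≠ 0, then c = 1/(2iεκ). In particular the coefficients of the formal asymptotic series at infinity grow factorially, so the series has zero radius of convergence. -/

import Mathlib

open Filter Topology Complex

set_option maxHeartbeats 1000000

/-- The coefficients of the formal asymptotic expansion at infinity of the ingoing solution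
satisfy `a_n / (n a_{n-1}) → 1/(2iεκ)` (when the limit exists and is nonzero). -/
theorem infinity_ingoing_coefficient_ratio
    (a : ℝ) (ha : |a| < 1) (s m : ℤ) (ω lam : ℂ) (hω : ω ≠ 0)
    (κ : ℝ) (hκ : κ = Real.sqrt (1 - a ^ 2))
    (ε τ : ℂ) (hε : ε = 2 * ω) (hτ : τ = (ε - (m : ℂ) * (a : ℂ)) / (κ : ℂ))
    (x : ℕ → ℂ)
    (hx0 : ∀ᶠ n in atTop, x n ≠ 0)
    (hrec : ∀ n : ℕ, 2 ≤ n →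
      x n = ((((n : ℂ) + I * ε) * ((n : ℂ) + 2 * I * (κ : ℂ) * ε + I * ε - 2 * (s : ℂ) - 1)
              - lam + ε ^ 2 + (κ : ℂ) * (2 * τ - I) * ε)
            / (2 * I * ε * (κ : ℂ) * (n : ℂ))) * x (n - 1)
          + ((((n : ℂ) + 2 * I * ε - 1) * (I * τ - ((n : ℂ) - (s : ℂ) + I * ε - 1)))
            / (2 * I * ε * (κ : ℂ) * (n : ℂ))) * x (n - 2))
    (c : ℂ) (hc : Tendsto (fun n => x n / ((n : ℂ) * x (n - 1))) atTop (𝓝 c))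
    (hc0 : c ≠ 0) :
    c = 1 / (2 * I * ε * (κ : ℂ)) := by
  have hκpos : 0 < κ := by
    rw [hκ]
    apply Real.sqrt_pos.2
    nlinarith [abs_lt.1 ha, _root_.sq_abs a]
  have hK : (κ : ℂ) ≠ 0 := by exact_mod_cast hκpos.ne'
  have hE : ε ≠ 0 := by rw [hε]; simp [hω]
  have hD : (2 * I * ε * (κ:ℂ)) ≠ 0 := by
    simp [hE, hK, I_ne_zero]
  set D := 2 * I * ε * (κ:ℂ) with hDdef
  set u : ℕ → ℂ := fun n => ((n:ℂ))⁻¹ with hu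
  have hu0 : Tendsto u atTop (𝓝 0) := by
    rw [tendsto_zero_iff_norm_tendsto_zero]
    simpa [hu, one_div] using (tendsto_one_div_atTop_nhds_zero_nat : Tendsto (fun n : ℕ => 1 / (n:ℝ)) atTop (𝓝 0))
  set P : ℕ → ℂ := fun n =>
    ((n : ℂ) + I * ε) * ((n : ℂ) + 2 * I * (κ : ℂ) * ε + I * ε - 2 * (s : ℂ) - 1)
      - lam + ε ^ 2 + (κ : ℂ) * (2 * τ - I) * ε with hP
  set Q : ℕ → ℂ := fun n =>
    ((n : ℂ) + 2 * I * ε - 1) * (I * τ - ((n : ℂ) - (s : ℂ) + I * ε - 1)) with hQ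
  -- limit of P n / n^2
  have hA : Tendsto (fun n : ℕ => P n * u n ^ 2) atTop (𝓝 1) := by
    have heq : (fun n : ℕ => (1 + I * ε * u n) *
        (1 + (2 * I * (κ:ℂ) * ε + I * ε - 2 * (s:ℂ) - 1) * u n)
        + (- lam + ε ^ 2 + (κ:ℂ) * (2 * τ - I) * ε) * u n ^ 2)
        =ᶠ[atTop] (fun n : ℕ => P n * u n ^ 2) := by
      filter_upwards [eventually_ge_atTop 1] with n hn
      have hn0 : (n:ℂ) ≠ 0 := Nat.cast_ne_zero.2 (by omega)
      simp only [hP, hu]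
      field_simp
      ring
    have hcont : Tendsto (fun z : ℂ => (1 + I * ε * z) *
        (1 + (2 * I * (κ:ℂ) * ε + I * ε - 2 * (s:ℂ) - 1) * z)
        + (- lam + ε ^ 2 + (κ:ℂ) * (2 * τ - I) * ε) * z ^ 2) (𝓝 0) (𝓝 1) := by
      have h : Continuous (fun z : ℂ => (1 + I * ε * z) *
          (1 + (2 * I * (κ:ℂ) * ε + I * ε - 2 * (s:ℂ) - 1) * z)
          + (- lam + ε ^ 2 + (κ:ℂ) * (2 * τ - I) * ε) * z ^ 2) := by fun_prop
      exact h.tendsto' 0 1 (by ring)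
    exact (hcont.comp hu0).congr' heq
  -- limit of Q n / n^2
  have hB : Tendsto (fun n : ℕ => Q n * u n ^ 2) atTop (𝓝 (-1)) := by
    have heq : (fun n : ℕ => (1 + (2 * I * ε - 1) * u n) *
        ((I * τ + (s:ℂ) - I * ε + 1) * u n - 1))
        =ᶠ[atTop] (fun n : ℕ => Q n * u n ^ 2) := by
      filter_upwards [eventually_ge_atTop 1] with n hn
      have hn0 : (n:ℂ) ≠ 0 := Nat.cast_ne_zero.2 (by omega)
      simp only [hQ, hu]
      field_simp
      ring
    have hcont : Tendsto (fun z : ℂ => (1 + (2 * I * ε - 1) * z) *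
        ((I * τ + (s:ℂ) - I * ε + 1) * z - 1)) (𝓝 0) (𝓝 (-1)) := by
      have h : Continuous (fun z : ℂ => (1 + (2 * I * ε - 1) * z) *
          ((I * τ + (s:ℂ) - I * ε + 1) * z - 1)) := by fun_prop
      exact h.tendsto' 0 (-1) (by ring)
    exact (hcont.comp hu0).congr' heq
  -- limit of 1/(n-1)
  have hv : Tendsto (fun n : ℕ => ((n:ℂ) - 1)⁻¹) atTop (𝓝 0) := by
    have h1 : Tendsto (fun n : ℕ => u (n - 1)) atTop (𝓝 0) :=
      hu0.comp (tendsto_sub_atTop_nat 1)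
    apply h1.congr'
    filter_upwards [eventually_ge_atTop 1] with n hn
    simp only [hu]
    rw [Nat.cast_sub (by omega : 1 ≤ n)]
    norm_num
  -- limit of the shifted ratio
  have hr' : Tendsto (fun n : ℕ => x (n - 1) / (((n - 1 : ℕ):ℂ) * x (n - 1 - 1)))
      atTop (𝓝 c) := hc.comp (tendsto_sub_atTop_nat 1)
  have hrinv : Tendsto (fun n : ℕ => (x (n - 1) / (((n - 1 : ℕ):ℂ) * x (n - 1 - 1)))⁻¹)
      atTop (𝓝 c⁻¹) := hr'.inv₀ hc0
  set G : ℕ → ℂ := fun n => (P n * u n ^ 2) / D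
    + ((Q n * u n ^ 2) * ((n:ℂ) - 1)⁻¹ / D) *
        (x (n - 1) / (((n - 1 : ℕ):ℂ) * x (n - 1 - 1)))⁻¹ with hG
  have hGlim : Tendsto G atTop (𝓝 (1 / D)) := by
    have : Tendsto G atTop (𝓝 (1 / D + ((-1) * 0 / D) * c⁻¹)) :=
      (hA.div_const D).add (((hB.mul hv).div_const D).mul hrinv)
    simpa using this
  -- eventual equality
  obtain ⟨N, hN⟩ := eventually_atTop.1 hx0
  have heq : (fun n : ℕ => x n / ((n:ℂ) * x (n - 1))) =ᶠ[atTop] G := by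
    filter_upwards [eventually_ge_atTop (N + 2)] with n hn
    have hn2 : 2 ≤ n := by omega
    have hx1 : x (n - 1) ≠ 0 := hN (n - 1) (by omega)
    have hx2 : x (n - 2) ≠ 0 := hN (n - 2) (by omega)
    have hn0 : (n:ℂ) ≠ 0 := Nat.cast_ne_zero.2 (by omega)
    have hn1 : (n:ℂ) - 1 ≠ 0 := by
      intro h
      have : (n:ℂ) = 1 := by linear_combination h
      have : n = 1 := by exact_mod_cast this
      omega
    have hcast : ((n - 1 : ℕ):ℂ) = (n:ℂ) - 1 := by
      rw [Nat.cast_sub (by omega : 1 ≤ n)]; norm_num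
    have hsub : n - 1 - 1 = n - 2 := by omega
    rw [hrec n hn2, add_div]
    simp only [hG, hP, hQ, hu, hcast, hsub, inv_div]
    congr 1
    · field_simp
    · have h2 : ∀ A y z w : ℂ, w ≠ 0 →
          A * w⁻¹ / D * (w * z / y) = A * z / (D * y) := by
        intro A y z w hw
        have h3 : A * w⁻¹ / D * (w * z / y) = w⁻¹ * w * (A * z / (D * y)) := by
          ring
        rw [h3, inv_mul_cancel₀ hw, one_mul]
      rw [h2 (Q n * u n ^ 2) (x (n - 1)) (x (n - 2)) ((n:ℂ) - 1) hn1]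
      simp only [hQ, hu]
      field_simp
  have hfin : Tendsto (fun n : ℕ => x n / ((n:ℂ) * x (n - 1))) atTop (𝓝 (1 / D)) :=
    hGlim.congr' heq.symm
  exact tendsto_nhds_unique hc hfin
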